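/- Invertibility of the coefficient matrix defining Step 2 of the vector QLTZ interpolation (core of Lemma 3.1): let M be the 2×2 real matrix with rows (∫_Q (∂φ₀/∂η)·ξ dλ, ∫_Q (∂φ₀/∂ξ)·ξ dλ) and (∫_Q (∂φ₀/∂η)·η dλ, ∫_Q (∂φ₀/∂ξ)·η dλ). Then det(M)·(α² + β² + 3)² = 48α⁴ + 48β⁴ − 96α²β² − 96α² − 96β² − 144, and det(M) ≠ 0 (its absolute value is (−48α⁴ − 48β⁴ + 96α²β² + 96α² + 96β² + 144)/(α²+β²+3)²). Consequently, for every (μ₁, μ₂) ∈ ℝ² there exists a unique pair (c₁, c₂) ∈ ℝ² such that ∫_Q (c₁·∂φ₀/∂η + c₂·∂φ₀/∂ξ)·ξ dλ = μ₁ and ∫_Q (c₁·∂φ₀/∂η + c₂·∂φ₀/∂ξ)·η dλ = μ₂. -/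

import Mathlib

open MeasureTheory

noncomputable section

/-- Vertex a₁ of the reference convex quadrilateral (points written as (η, ξ)). -/
def a1 (α β : ℝ) : ℝ × ℝ := (-1 - α, 1 - β)

/-- Vertex a₂. -/
def a2 (α β : ℝ) : ℝ × ℝ := (-1 + α, -1 + β)

/-- Vertex a₃. -/
def a3 (α β : ℝ) : ℝ × ℝ := (1 - α, -1 - β)

/-- Vertex a₄. -/
def a4 (α β : ℝ) : ℝ × ℝ := (1 + α, 1 + β)

/-- The reference convex quadrilateral Q = conv{a₁, a₂, a₃, a₄}. -/
def Quad (α β : ℝ) : Set (ℝ × ℝ) :=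
  convexHull ℝ {a1 α β, a2 α β, a3 α β, a4 α β}

/-- Average of `u` over the segment from `P` to `R`:
    ⨍ u = ∫_{t ∈ [0,1]} u((1−t)P + tR) dt. -/
def edgeAvg (P R : ℝ × ℝ) (u : ℝ × ℝ → ℝ) : ℝ :=
  ∫ t in (0:ℝ)..1, u ((1 - t) • P + t • R)

/-- Average of `u` over the quadrilateral Q: (∫_Q u dλ)/λ(Q). -/
def quadAvg (α β : ℝ) (u : ℝ × ℝ → ℝ) : ℝ :=
  (∫ p in Quad α β, u p) / (volume (Quad α β)).toReal

/-- The basis function φ₀ of the QLTZ element: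
φ₀ = −3(3ξ² + 3η² − 2αξ − 2βη − (4 + α² + β²))/(2(α² + β² + 3)),
with ξ(p) = p.2 and η(p) = p.1. -/
def phi0 (α β : ℝ) (p : ℝ × ℝ) : ℝ :=
  -3 * (3 * p.2 ^ 2 + 3 * p.1 ^ 2 - 2 * α * p.2 - 2 * β * p.1 - (4 + α ^ 2 + β ^ 2)) /
    (2 * (α ^ 2 + β ^ 2 + 3))

/-- φ₁ = −(3/4)ξ² + ((β−1)/2)η + (3+β²)/4 − ((β²−β+3)/6)φ₀. -/
def phi1 (α β : ℝ) (p : ℝ × ℝ) : ℝ :=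
  -(3 / 4) * p.2 ^ 2 + (β - 1) / 2 * p.1 + (3 + β ^ 2) / 4 -
    (β ^ 2 - β + 3) / 6 * phi0 α β p

/-- φ₂ = −(3/4)η² + ((α−1)/2)ξ + (3+α²)/4 − ((α²−α+3)/6)φ₀. -/
def phi2 (α β : ℝ) (p : ℝ × ℝ) : ℝ :=
  -(3 / 4) * p.1 ^ 2 + (α - 1) / 2 * p.2 + (3 + α ^ 2) / 4 -
    (α ^ 2 - α + 3) / 6 * phi0 α β p

/-- φ₃ = −(3/4)ξ² + ((β+1)/2)η + (3+β²)/4 − ((β²+β+3)/6)φ₀. -/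
def phi3 (α β : ℝ) (p : ℝ × ℝ) : ℝ :=
  -(3 / 4) * p.2 ^ 2 + (β + 1) / 2 * p.1 + (3 + β ^ 2) / 4 -
    (β ^ 2 + β + 3) / 6 * phi0 α β p

/-- φ₄ = −(3/4)η² + ((α+1)/2)ξ + (3+α²)/4 − ((α²+α+3)/6)φ₀. -/
def phi4 (α β : ℝ) (p : ℝ × ℝ) : ℝ :=
  -(3 / 4) * p.1 ^ 2 + (α + 1) / 2 * p.2 + (3 + α ^ 2) / 4 -
    (α ^ 2 + α + 3) / 6 * phi0 α β p

/-- The coefficient matrix of Step 2 of the vector QLTZ interpolation: rows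
(∫_Q (∂φ₀/∂η)·ξ, ∫_Q (∂φ₀/∂ξ)·ξ) and (∫_Q (∂φ₀/∂η)·η, ∫_Q (∂φ₀/∂ξ)·η). -/
def coeffMat (α β : ℝ) : Matrix (Fin 2) (Fin 2) ℝ :=
  !![∫ p in Quad α β, fderiv ℝ (phi0 α β) p (1, 0) * p.2,
     ∫ p in Quad α β, fderiv ℝ (phi0 α β) p (0, 1) * p.2;
     ∫ p in Quad α β, fderiv ℝ (phi0 α β) p (1, 0) * p.1,
     ∫ p in Quad α β, fderiv ℝ (phi0 α β) p (0, 1) * p.1]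

namespace QLTZ

set_option maxHeartbeats 1000000

/-! ### The bilinear map from the square onto the quadrilateral -/

/-- The bilinear map sending `[-1,1]²` onto the quadrilateral `Quad α β`. -/
def Tmap (α β : ℝ) (q : ℝ × ℝ) : ℝ × ℝ :=
  (q.1 + α * (q.1 * q.2), q.2 + β * (q.1 * q.2))

/-- The square `[-1,1] × [-1,1]`. -/
def Sq : Set (ℝ × ℝ) := Set.Icc (-1 : ℝ) 1 ×ˢ Set.Icc (-1 : ℝ) 1

lemma Sq_measurable : MeasurableSet Sq :=
  measurableSet_Icc.prod measurableSet_Icc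

/-- The derivative of `Tmap`. -/
def Tlin (α β : ℝ) (q : ℝ × ℝ) : ℝ × ℝ →L[ℝ] ℝ × ℝ :=
  LinearMap.toContinuousLinearMap (Matrix.toLin (Module.Basis.finTwoProd ℝ) (Module.Basis.finTwoProd ℝ)
    !![1 + α * q.2, α * q.1; β * q.2, 1 + β * q.1])

lemma Tlin_det (α β : ℝ) (q : ℝ × ℝ) : (Tlin α β q).det = 1 + β * q.1 + α * q.2 := by
  simp only [Tlin, ContinuousLinearMap.det, LinearMap.coe_toContinuousLinearMap,
    LinearMap.det_toLin, Matrix.det_fin_two_of]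
  ring

lemma hasFDerivAt_Tmap (α β : ℝ) (q : ℝ × ℝ) : HasFDerivAt (Tmap α β) (Tlin α β q) q := by
  have h := HasFDerivAt.prodMk (𝕜 := ℝ)
    (hasFDerivAt_fst.add ((hasFDerivAt_fst.mul hasFDerivAt_snd).const_mul α))
    (hasFDerivAt_snd.add ((hasFDerivAt_fst.mul hasFDerivAt_snd).const_mul β)) (x := q)
  have heq : Tlin α β q =
      (ContinuousLinearMap.fst ℝ ℝ ℝ +
        α • (q.1 • ContinuousLinearMap.snd ℝ ℝ ℝ + q.2 • ContinuousLinearMap.fst ℝ ℝ ℝ)).prod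
      (ContinuousLinearMap.snd ℝ ℝ ℝ +
        β • (q.1 • ContinuousLinearMap.snd ℝ ℝ ℝ + q.2 • ContinuousLinearMap.fst ℝ ℝ ℝ)) := by
    rw [Tlin, Matrix.toLin_finTwoProd_toContinuousLinearMap]
    refine ContinuousLinearMap.ext fun v => ?_
    simp [Prod.ext_iff]
    constructor <;> ring
  rw [heq]
  exact h

lemma Tmap_injOn (α β : ℝ) (hα : 0 < α) (hβ : 0 < β) (hαβ : α + β < 1) :
    Set.InjOn (Tmap α β) Sq := by
  rintro ⟨s, t⟩ ⟨hs, ht⟩ ⟨s', t'⟩ ⟨hs', ht'⟩ h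
  rw [Set.mem_Icc] at hs ht hs' ht'
  have h1 : s + α * (s * t) = s' + α * (s' * t') := congrArg Prod.fst h
  have h2 : t + β * (s * t) = t' + β * (s' * t') := congrArg Prod.snd h
  have key : (s * t - s' * t') * (1 + α * t + β * s') = 0 := by
    linear_combination t * h1 + s' * h2
  have hpos : 0 < 1 + α * t + β * s' := by nlinarith [ht.1, hs'.1]
  have hu : s * t - s' * t' = 0 := by
    rcases mul_eq_zero.1 key with h' | h'
    · exact h'
    · linarith
  have hss : s = s' := by linear_combination h1 - α * hu
  have htt : t = t' := by linear_combination h2 - β * hu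
  simp [Prod.ext_iff, hss, htt]

lemma image_subset_quad (α β : ℝ) : Tmap α β '' Sq ⊆ Quad α β := by
  rintro _ ⟨⟨s, t⟩, ⟨hs, ht⟩, rfl⟩
  rw [Set.mem_Icc] at hs ht
  have hQ : Convex ℝ (Quad α β) := convex_convexHull ℝ _
  have m1 : a1 α β ∈ Quad α β := subset_convexHull ℝ _ (by simp)
  have m2 : a2 α β ∈ Quad α β := subset_convexHull ℝ _ (by simp)
  have m3 : a3 α β ∈ Quad α β := subset_convexHull ℝ _ (by simp)
  have m4 : a4 α β ∈ Quad α β := subset_convexHull ℝ _ (by simp)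
  have hv1 : (0:ℝ) ≤ 1 - (s+1)/2 := by linarith [hs.2]
  have hv2 : (0:ℝ) ≤ (s+1)/2 := by linarith [hs.1]
  have hu1 : (0:ℝ) ≤ 1 - (t+1)/2 := by linarith [ht.2]
  have hu2 : (0:ℝ) ≤ (t+1)/2 := by linarith [ht.1]
  have hA := hQ m2 m3 hv1 hv2 (by ring)
  have hB := hQ m1 m4 hv1 hv2 (by ring)
  have hP := hQ hA hB hu1 hu2 (by ring)
  convert hP using 1
  simp only [Tmap, a1, a2, a3, a4, Prod.smul_mk, smul_eq_mul, Prod.mk_add_mk, Prod.ext_iff]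
  constructor <;> ring

lemma quad_subset_H (α β : ℝ) (hα : 0 < α) (hβ : 0 < β) (hαβ : α + β < 1) :
    Quad α β ⊆ {p : ℝ × ℝ |
      0 ≤ (1-β)*(p.1+1) + α*p.2 ∧ 0 ≤ (1+β)*(1-p.1) + α*p.2 ∧
      0 ≤ (1-α)*(p.2+1) + β*p.1 ∧ 0 ≤ (1+α)*(1-p.2) + β*p.1} := by
  apply convexHull_min
  · rintro p hp
    simp only [Set.mem_insert_iff, Set.mem_singleton_iff] at hp
    rcases hp with rfl | rfl | rfl | rfl <;>
      simp only [Set.mem_setOf_eq, a1, a2, a3, a4] <;>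
      refine ⟨by nlinarith, by nlinarith, by nlinarith, by nlinarith⟩
  · intro p hp q hq u v hu hv huv
    simp only [Set.mem_setOf_eq] at hp hq ⊢
    obtain ⟨hp1, hp2, hp3, hp4⟩ := hp
    obtain ⟨hq1, hq2, hq3, hq4⟩ := hq
    simp only [Prod.fst_add, Prod.snd_add, Prod.smul_fst, Prod.smul_snd, smul_eq_mul]
    refine ⟨?_, ?_, ?_, ?_⟩
    · nlinarith [mul_nonneg hu hp1, mul_nonneg hv hq1]
    · nlinarith [mul_nonneg hu hp2, mul_nonneg hv hq2]
    · nlinarith [mul_nonneg hu hp3, mul_nonneg hv hq3]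
    · nlinarith [mul_nonneg hu hp4, mul_nonneg hv hq4]

lemma H_subset_image (α β : ℝ) (hα : 0 < α) (hβ : 0 < β) (hαβ : α + β < 1) :
    {p : ℝ × ℝ |
      0 ≤ (1-β)*(p.1+1) + α*p.2 ∧ 0 ≤ (1+β)*(1-p.1) + α*p.2 ∧
      0 ≤ (1-α)*(p.2+1) + β*p.1 ∧ 0 ≤ (1+α)*(1-p.2) + β*p.1} ⊆ Tmap α β '' Sq := by
  rintro ⟨x, y⟩ ⟨hL1, hL2, hL3, hL4⟩
  have hα1 : α < 1 := by linarith
  have hβ1 : β < 1 := by linarith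
  set K : ℝ := 1 + β*x - α*y with hKdef
  set Δ : ℝ := K^2 + 4*α*y with hΔdef
  have hΔ0 : 0 ≤ Δ := by nlinarith [sq_nonneg (K - 2*α)]
  set r : ℝ := Real.sqrt Δ with hrdef
  have hr0 : 0 ≤ r := Real.sqrt_nonneg _
  have hr2 : r^2 = Δ := Real.sq_sqrt hΔ0
  set t : ℝ := (-K + r)/(2*α) with htdef
  have hKα : 0 ≤ K + 2*α := by nlinarith
  have ht1 : t ≤ 1 := by
    have hle : Δ ≤ (K + 2*α)^2 := by nlinarith
    have h1 : r ≤ K + 2*α := by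
      calc r ≤ Real.sqrt ((K+2*α)^2) := Real.sqrt_le_sqrt hle
        _ = K + 2*α := Real.sqrt_sq hKα
    rw [htdef, div_le_one (by positivity)]
    linarith
  have ht1' : -1 ≤ t := by
    have h1 : K - 2*α ≤ r := by
      rcases le_or_gt (K - 2*α) 0 with h | h
      · linarith
      · have hle : (K-2*α)^2 ≤ Δ := by nlinarith
        calc K - 2*α = Real.sqrt ((K-2*α)^2) := (Real.sqrt_sq h.le).symm
          _ ≤ r := Real.sqrt_le_sqrt hle
    rw [htdef, le_div_iff₀ (by positivity)]
    linarith
  have ht_quad : α * t^2 + K * t - y = 0 := by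
    have hα0 : (α:ℝ) ≠ 0 := ne_of_gt hα
    have hexp : α * t^2 + K*t - y = (r^2 - Δ)/(4*α) := by
      rw [htdef, hΔdef]
      field_simp
      ring
    rw [hexp, hr2, sub_self, zero_div]
  have hαt : α * t = (-K + r)/2 := by
    rw [htdef]
    field_simp
  have hden : 0 < 1 + α * t := by nlinarith
  set s : ℝ := x/(1+α*t) with hsdef
  have hs1 : s ≤ 1 := by
    rw [hsdef, div_le_one hden]
    rcases le_or_gt x 0 with hx | hx
    · linarith
    · have h2 : K + 2*x - 2 ≤ r := by
        rcases le_or_gt (K + 2*x - 2) 0 with h | h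
        · linarith
        · have hle : (K+2*x-2)^2 ≤ Δ := by nlinarith
          calc K+2*x-2 = Real.sqrt ((K+2*x-2)^2) := (Real.sqrt_sq h.le).symm
            _ ≤ r := Real.sqrt_le_sqrt hle
      have := hαt
      linarith
  have hs2 : -1 ≤ s := by
    rw [hsdef, le_div_iff₀ hden]
    rcases le_or_gt x 0 with hx | hx
    · have h2 : K - 2 - 2*x ≤ r := by
        rcases le_or_gt (K - 2 - 2*x) 0 with h | h
        · linarith
        · have hle : (K-2-2*x)^2 ≤ Δ := by nlinarith
          calc K-2-2*x = Real.sqrt ((K-2-2*x)^2) := (Real.sqrt_sq h.le).symm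
            _ ≤ r := Real.sqrt_le_sqrt hle
      have := hαt
      linarith
    · have h2 : K - 2 - 2*x < 0 := by nlinarith [mul_pos hx hβ, mul_pos hx (sub_pos.2 hα1)]
      have := hαt
      linarith
  refine ⟨(s, t), Set.mem_prod.2 ⟨Set.mem_Icc.2 ⟨hs2, hs1⟩, Set.mem_Icc.2 ⟨ht1', ht1⟩⟩, ?_⟩
  have hx1 : s * (1 + α*t) = x := by
    rw [hsdef]
    field_simp
  have hy1 : (t + β*(s*t) - y) * (1 + α*t) = 0 := by
    linear_combination (β*t) * hx1 + ht_quad + (-(α*y) + α*β*(s*t)) * (rfl : (t:ℝ) = t)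
  have hy2 : t + β*(s*t) = y := by
    rcases mul_eq_zero.1 hy1 with h' | h'
    · linarith
    · linarith
  simp only [Tmap, Prod.ext_iff]
  constructor
  · linarith [hx1]
  · exact hy2

lemma quad_eq_image (α β : ℝ) (hα : 0 < α) (hβ : 0 < β) (hαβ : α + β < 1) :
    Quad α β = Tmap α β '' Sq :=
  Set.Subset.antisymm ((quad_subset_H α β hα hβ hαβ).trans (H_subset_image α β hα hβ hαβ))
    (image_subset_quad α β)

/-! ### Integration over the square -/

def mval : Fin 4 → ℝ := ![2, 0, 2/3, 0]

lemma integral_Icc_pow (i : Fin 4) : ∫ x in Set.Icc (-1:ℝ) 1, x ^ (i:ℕ) = mval i := by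
  have h : ∀ n : ℕ, ∫ x in Set.Icc (-1:ℝ) 1, x ^ n = (1 - (-1:ℝ)^(n+1))/(n+1) := by
    intro n
    rw [MeasureTheory.integral_Icc_eq_integral_Ioc,
      ← intervalIntegral.integral_of_le (by norm_num : (-1:ℝ) ≤ 1), integral_pow]
    norm_num
  fin_cases i <;> rw [h] <;> norm_num [mval]

lemma integral_Sq_poly (c : Fin 4 → Fin 4 → ℝ) :
    ∫ q in Sq, (∑ i : Fin 4, ∑ j : Fin 4, c i j * q.1 ^ (i:ℕ) * q.2 ^ (j:ℕ)) =
      ∑ i : Fin 4, ∑ j : Fin 4, c i j * mval i * mval j := by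
  have hcont : Continuous fun q : ℝ × ℝ =>
      ∑ i : Fin 4, ∑ j : Fin 4, c i j * q.1 ^ (i:ℕ) * q.2 ^ (j:ℕ) := by
    refine continuous_finset_sum _ fun i _ => continuous_finset_sum _ fun j _ => ?_
    exact (continuous_const.mul (continuous_fst.pow _)).mul (continuous_snd.pow _)
  have hint : IntegrableOn (fun q : ℝ × ℝ =>
      ∑ i : Fin 4, ∑ j : Fin 4, c i j * q.1 ^ (i:ℕ) * q.2 ^ (j:ℕ)) Sq volume :=
    hcont.continuousOn.integrableOn_compact (isCompact_Icc.prod isCompact_Icc)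
  rw [Sq, Measure.volume_eq_prod] at hint ⊢
  rw [setIntegral_prod _ hint]
  have inner : ∀ s : ℝ,
      (∫ t in Set.Icc (-1:ℝ) 1, ∑ i : Fin 4, ∑ j : Fin 4, c i j * s ^ (i:ℕ) * t ^ (j:ℕ)) =
        ∑ i : Fin 4, ∑ j : Fin 4, c i j * s ^ (i:ℕ) * mval j := by
    intro s
    rw [integral_finset_sum _ (fun i _ => ((continuous_finset_sum _ fun j _ =>
      (continuous_const.mul (continuous_const.pow _)).mul (continuous_id.pow _) :
        Continuous fun t : ℝ => ∑ j : Fin 4, c i j * s ^ (i:ℕ) * t ^ (j:ℕ))).integrableOn_Icc)]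
    refine Finset.sum_congr rfl fun i _ => ?_
    rw [integral_finset_sum _ (fun j _ =>
      ((by exact (continuous_const.mul (continuous_const.pow _)).mul (continuous_id.pow _) :
        Continuous fun t : ℝ => c i j * s ^ (i:ℕ) * t ^ (j:ℕ))).integrableOn_Icc)]
    refine Finset.sum_congr rfl fun j _ => ?_
    rw [MeasureTheory.integral_const_mul, integral_Icc_pow]
  simp only [inner]
  have outer_eq : ∀ s : ℝ,
      (∑ i : Fin 4, ∑ j : Fin 4, c i j * s ^ (i:ℕ) * mval j) =
        ∑ i : Fin 4, (∑ j : Fin 4, c i j * mval j) * s ^ (i:ℕ) := by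
    intro s
    refine Finset.sum_congr rfl fun i _ => ?_
    rw [Finset.sum_mul]
    refine Finset.sum_congr rfl fun j _ => ?_
    ring
  simp only [outer_eq]
  rw [integral_finset_sum _ (fun i _ =>
    ((by exact continuous_const.mul (continuous_id.pow _) :
      Continuous fun s : ℝ => (∑ j : Fin 4, c i j * mval j) * s ^ (i:ℕ))).integrableOn_Icc)]
  refine Finset.sum_congr rfl fun i _ => ?_
  rw [MeasureTheory.integral_const_mul, integral_Icc_pow]
  rw [Finset.sum_mul]
  refine Finset.sum_congr rfl fun j _ => ?_
  ring

lemma integral_quad_eq (α β : ℝ) (hα : 0 < α) (hβ : 0 < β) (hαβ : α + β < 1)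
    (g : ℝ × ℝ → ℝ) :
    ∫ p in Quad α β, g p = ∫ q in Sq, (1 + β*q.1 + α*q.2) * g (Tmap α β q) := by
  rw [quad_eq_image α β hα hβ hαβ]
  rw [integral_image_eq_integral_abs_det_fderiv_smul volume Sq_measurable
    (fun q _ => (hasFDerivAt_Tmap α β q).hasFDerivWithinAt) (Tmap_injOn α β hα hβ hαβ) g]
  refine setIntegral_congr_fun Sq_measurable ?_
  intro q hq
  obtain ⟨hs, ht⟩ := hq
  rw [Set.mem_Icc] at hs ht
  simp only [Tlin_det, smul_eq_mul]
  rw [abs_of_nonneg (by nlinarith [hs.1, ht.1] : (0:ℝ) ≤ 1 + β*q.1 + α*q.2)]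

/-! ### The four moment integrals -/

lemma int_entry11 (α β : ℝ) (hα : 0 < α) (hβ : 0 < β) (hαβ : α + β < 1) :
    ∫ p in Quad α β, (3*β - 9*p.1) * p.2 = -8*α*β := by
  rw [integral_quad_eq α β hα hβ hαβ (fun p => (3*β - 9*p.1) * p.2)]
  have heq : ∀ q : ℝ × ℝ, (1 + β*q.1 + α*q.2) *
      ((3*β - 9*(Tmap α β q).1) * (Tmap α β q).2) =
      ∑ i : Fin 4, ∑ j : Fin 4,
        (![![0, 3*β, 3*α*β, 0],
           ![0, -9 + 6*β*β, -18*α + 3*α*β*β, -9*α*α],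
           ![0, -18*β + 3*β*β*β, -27*α*β, -9*α*α*β],
           ![0, -9*β*β, -9*α*β*β, 0]] : Fin 4 → Fin 4 → ℝ) i j * q.1 ^ (i:ℕ) * q.2 ^ (j:ℕ) := by
    intro q
    simp [Tmap, Fin.sum_univ_four]
    ring
  simp only [heq]
  rw [integral_Sq_poly]
  simp [Fin.sum_univ_four, mval]
  ring

lemma int_entry12 (α β : ℝ) (hα : 0 < α) (hβ : 0 < β) (hαβ : α + β < 1) :
    ∫ p in Quad α β, (3*α - 9*p.2) * p.2 = 4*α^2 - 12*β^2 - 12 := by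
  rw [integral_quad_eq α β hα hβ hαβ (fun p => (3*α - 9*p.2) * p.2)]
  have heq : ∀ q : ℝ × ℝ, (1 + β*q.1 + α*q.2) *
      ((3*α - 9*(Tmap α β q).2) * (Tmap α β q).2) =
      ∑ i : Fin 4, ∑ j : Fin 4,
        (![![0, 3*α, -9 + 3*α*α, -9*α],
           ![0, 6*α*β, -27*β + 3*α*α*β, -18*α*β],
           ![0, 3*α*β*β, -27*β*β, -9*α*β*β],
           ![0, 0, -9*β*β*β, 0]] : Fin 4 → Fin 4 → ℝ) i j * q.1 ^ (i:ℕ) * q.2 ^ (j:ℕ) := by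
    intro q
    simp [Tmap, Fin.sum_univ_four]
    ring
  simp only [heq]
  rw [integral_Sq_poly]
  simp [Fin.sum_univ_four, mval]
  ring

lemma int_entry21 (α β : ℝ) (hα : 0 < α) (hβ : 0 < β) (hαβ : α + β < 1) :
    ∫ p in Quad α β, (3*β - 9*p.1) * p.1 = 4*β^2 - 12*α^2 - 12 := by
  rw [integral_quad_eq α β hα hβ hαβ (fun p => (3*β - 9*p.1) * p.1)]
  have heq : ∀ q : ℝ × ℝ, (1 + β*q.1 + α*q.2) *
      ((3*β - 9*(Tmap α β q).1) * (Tmap α β q).1) =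
      ∑ i : Fin 4, ∑ j : Fin 4,
        (![![0, 0, 0, 0],
           ![3*β, 6*α*β, 3*α*α*β, 0],
           ![-9 + 3*β*β, -27*α + 3*α*β*β, -27*α*α, -9*α*α*α],
           ![-9*β, -18*α*β, -9*α*α*β, 0]] : Fin 4 → Fin 4 → ℝ) i j * q.1 ^ (i:ℕ) * q.2 ^ (j:ℕ) := by
    intro q
    simp [Tmap, Fin.sum_univ_four]
    ring
  simp only [heq]
  rw [integral_Sq_poly]
  simp [Fin.sum_univ_four, mval]
  ring

lemma int_entry22 (α β : ℝ) (hα : 0 < α) (hβ : 0 < β) (hαβ : α + β < 1) :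
    ∫ p in Quad α β, (3*α - 9*p.2) * p.1 = -8*α*β := by
  rw [integral_quad_eq α β hα hβ hαβ (fun p => (3*α - 9*p.2) * p.1)]
  have heq : ∀ q : ℝ × ℝ, (1 + β*q.1 + α*q.2) *
      ((3*α - 9*(Tmap α β q).2) * (Tmap α β q).1) =
      ∑ i : Fin 4, ∑ j : Fin 4,
        (![![0, 0, 0, 0],
           ![3*α, -9 + 6*α*α, -18*α + 3*α*α*α, -9*α*α],
           ![3*α*β, -18*β + 3*α*α*β, -27*α*β, -9*α*α*β],
           ![0, -9*β*β, -9*α*β*β, 0]] : Fin 4 → Fin 4 → ℝ) i j * q.1 ^ (i:ℕ) * q.2 ^ (j:ℕ) := by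
    intro q
    simp [Tmap, Fin.sum_univ_four]
    ring
  simp only [heq]
  rw [integral_Sq_poly]
  simp [Fin.sum_univ_four, mval]
  ring

/-! ### The derivative of φ₀ -/

lemma phi0_hasFDeriv (α β : ℝ) (p : ℝ × ℝ) :
    HasFDerivAt (phi0 α β)
      (((3*β - 9*p.1)/(α^2+β^2+3)) • ContinuousLinearMap.fst ℝ ℝ ℝ +
       ((3*α - 9*p.2)/(α^2+β^2+3)) • ContinuousLinearMap.snd ℝ ℝ ℝ) p := by
  have hD : (α^2+β^2+3) ≠ 0 := by positivity
  have h2 : HasFDerivAt (fun p : ℝ × ℝ => p.2 ^ 2)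
      ((2 * p.2) • ContinuousLinearMap.snd ℝ ℝ ℝ) p := by
    have := (hasFDerivAt_snd (𝕜 := ℝ) (E := ℝ) (F := ℝ) (p := p)).mul
      (hasFDerivAt_snd (𝕜 := ℝ) (E := ℝ) (F := ℝ) (p := p))
    have heq : p.2 • ContinuousLinearMap.snd ℝ ℝ ℝ + p.2 • ContinuousLinearMap.snd ℝ ℝ ℝ =
        (2 * p.2) • ContinuousLinearMap.snd ℝ ℝ ℝ := by
      refine ContinuousLinearMap.ext fun v => ?_
      simp
      ring
    rw [← heq]
    simp only [sq]
    exact this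
  have h1 : HasFDerivAt (fun p : ℝ × ℝ => p.1 ^ 2)
      ((2 * p.1) • ContinuousLinearMap.fst ℝ ℝ ℝ) p := by
    have := (hasFDerivAt_fst (𝕜 := ℝ) (E := ℝ) (F := ℝ) (p := p)).mul
      (hasFDerivAt_fst (𝕜 := ℝ) (E := ℝ) (F := ℝ) (p := p))
    have heq : p.1 • ContinuousLinearMap.fst ℝ ℝ ℝ + p.1 • ContinuousLinearMap.fst ℝ ℝ ℝ =
        (2 * p.1) • ContinuousLinearMap.fst ℝ ℝ ℝ := by
      refine ContinuousLinearMap.ext fun v => ?_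
      simp
      ring
    rw [← heq]
    simp only [sq]
    exact this
  have hsum := ((((h2.const_mul (3:ℝ)).add (h1.const_mul (3:ℝ))).sub
      ((hasFDerivAt_snd (𝕜 := ℝ) (E := ℝ) (F := ℝ) (p := p)).const_mul (2*α))).sub
      ((hasFDerivAt_fst (𝕜 := ℝ) (E := ℝ) (F := ℝ) (p := p)).const_mul (2*β))).sub_const
      (4 + α^2 + β^2)
  have hall := (hsum.const_mul (-3)).const_mul ((2*(α^2+β^2+3))⁻¹)
  have hfun : (phi0 α β) = fun p : ℝ × ℝ =>
      (2 * (α ^ 2 + β ^ 2 + 3))⁻¹ *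
        (-3 * (3 * p.2 ^ 2 + 3 * p.1 ^ 2 - 2 * α * p.2 - 2 * β * p.1 - (4 + α ^ 2 + β ^ 2))) := by
    funext p
    rw [phi0]
    field_simp
  rw [hfun]
  refine hall.congr_fderiv ?_
  refine ContinuousLinearMap.ext fun v => ?_
  simp [ContinuousLinearMap.smul_apply, smul_eq_mul]
  field_simp
  ring

lemma fderiv_phi0_eta (α β : ℝ) (p : ℝ × ℝ) :
    fderiv ℝ (phi0 α β) p (1, 0) = (3*β - 9*p.1)/(α^2+β^2+3) := by
  rw [(phi0_hasFDeriv α β p).fderiv]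
  simp

lemma fderiv_phi0_xi (α β : ℝ) (p : ℝ × ℝ) :
    fderiv ℝ (phi0 α β) p (0, 1) = (3*α - 9*p.2)/(α^2+β^2+3) := by
  rw [(phi0_hasFDeriv α β p).fderiv]
  simp

/-! ### The matrix entries -/

lemma quad_compact (α β : ℝ) : IsCompact (Quad α β) := by
  exact Set.Finite.isCompact_convexHull ℝ (Set.toFinite _)

lemma integrableOn_quad (α β : ℝ) {f : ℝ × ℝ → ℝ} (hf : Continuous f) :
    IntegrableOn f (Quad α β) volume :=
  hf.continuousOn.integrableOn_compact (quad_compact α β)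

lemma entry00 (α β : ℝ) (hα : 0 < α) (hβ : 0 < β) (hαβ : α + β < 1) :
    ∫ p in Quad α β, fderiv ℝ (phi0 α β) p (1, 0) * p.2 = (-8*α*β)/(α^2+β^2+3) := by
  have hD : (α^2+β^2+3) ≠ 0 := by positivity
  calc ∫ p in Quad α β, fderiv ℝ (phi0 α β) p (1, 0) * p.2
      = ∫ p in Quad α β, (1/(α^2+β^2+3)) * ((3*β - 9*p.1) * p.2) := by
        refine integral_congr_ae (Filter.EventuallyEq.of_eq (funext fun p => ?_))
        rw [fderiv_phi0_eta]
        field_simp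
    _ = (1/(α^2+β^2+3)) * ∫ p in Quad α β, (3*β - 9*p.1) * p.2 :=
        MeasureTheory.integral_const_mul _ _
    _ = (-8*α*β)/(α^2+β^2+3) := by
        rw [int_entry11 α β hα hβ hαβ]
        field_simp

lemma entry01 (α β : ℝ) (hα : 0 < α) (hβ : 0 < β) (hαβ : α + β < 1) :
    ∫ p in Quad α β, fderiv ℝ (phi0 α β) p (0, 1) * p.2 =
      (4*α^2 - 12*β^2 - 12)/(α^2+β^2+3) := by
  have hD : (α^2+β^2+3) ≠ 0 := by positivity
  calc ∫ p in Quad α β, fderiv ℝ (phi0 α β) p (0, 1) * p.2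
      = ∫ p in Quad α β, (1/(α^2+β^2+3)) * ((3*α - 9*p.2) * p.2) := by
        refine integral_congr_ae (Filter.EventuallyEq.of_eq (funext fun p => ?_))
        rw [fderiv_phi0_xi]
        field_simp
    _ = (1/(α^2+β^2+3)) * ∫ p in Quad α β, (3*α - 9*p.2) * p.2 :=
        MeasureTheory.integral_const_mul _ _
    _ = (4*α^2 - 12*β^2 - 12)/(α^2+β^2+3) := by
        rw [int_entry12 α β hα hβ hαβ]
        field_simp

lemma entry10 (α β : ℝ) (hα : 0 < α) (hβ : 0 < β) (hαβ : α + β < 1) :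
    ∫ p in Quad α β, fderiv ℝ (phi0 α β) p (1, 0) * p.1 =
      (4*β^2 - 12*α^2 - 12)/(α^2+β^2+3) := by
  have hD : (α^2+β^2+3) ≠ 0 := by positivity
  calc ∫ p in Quad α β, fderiv ℝ (phi0 α β) p (1, 0) * p.1
      = ∫ p in Quad α β, (1/(α^2+β^2+3)) * ((3*β - 9*p.1) * p.1) := by
        refine integral_congr_ae (Filter.EventuallyEq.of_eq (funext fun p => ?_))
        rw [fderiv_phi0_eta]
        field_simp
    _ = (1/(α^2+β^2+3)) * ∫ p in Quad α β, (3*β - 9*p.1) * p.1 :=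
        MeasureTheory.integral_const_mul _ _
    _ = (4*β^2 - 12*α^2 - 12)/(α^2+β^2+3) := by
        rw [int_entry21 α β hα hβ hαβ]
        field_simp

lemma entry11 (α β : ℝ) (hα : 0 < α) (hβ : 0 < β) (hαβ : α + β < 1) :
    ∫ p in Quad α β, fderiv ℝ (phi0 α β) p (0, 1) * p.1 = (-8*α*β)/(α^2+β^2+3) := by
  have hD : (α^2+β^2+3) ≠ 0 := by positivity
  calc ∫ p in Quad α β, fderiv ℝ (phi0 α β) p (0, 1) * p.1
      = ∫ p in Quad α β, (1/(α^2+β^2+3)) * ((3*α - 9*p.2) * p.1) := by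
        refine integral_congr_ae (Filter.EventuallyEq.of_eq (funext fun p => ?_))
        rw [fderiv_phi0_xi]
        field_simp
    _ = (1/(α^2+β^2+3)) * ∫ p in Quad α β, (3*α - 9*p.2) * p.1 :=
        MeasureTheory.integral_const_mul _ _
    _ = (-8*α*β)/(α^2+β^2+3) := by
        rw [int_entry22 α β hα hβ hαβ]
        field_simp

end QLTZ

/-- Invertibility of the coefficient matrix defining Step 2 of the vector QLTZ
interpolation (core of Lemma 3.1): det(M)·D² = 48α⁴ + 48β⁴ − 96α²β² − 96α² − 96β² − 144
(D = α² + β² + 3), det(M) ≠ 0 with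
|det(M)| = (−48α⁴ − 48β⁴ + 96α²β² + 96α² + 96β² + 144)/D², and consequently for every
(μ₁, μ₂) ∈ ℝ² there is a unique (c₁, c₂) matching the two weighted-integral data. -/
theorem coeffMat_invertible (α β : ℝ) (hα : 0 < α) (hβ : 0 < β) (hαβ : α + β < 1) :
    (coeffMat α β).det * (α ^ 2 + β ^ 2 + 3) ^ 2 =
      48 * α ^ 4 + 48 * β ^ 4 - 96 * α ^ 2 * β ^ 2 - 96 * α ^ 2 - 96 * β ^ 2 - 144 ∧
    (coeffMat α β).det ≠ 0 ∧
    |(coeffMat α β).det| =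
      (-48 * α ^ 4 - 48 * β ^ 4 + 96 * α ^ 2 * β ^ 2 + 96 * α ^ 2 + 96 * β ^ 2 + 144) /
        (α ^ 2 + β ^ 2 + 3) ^ 2 ∧
    (∀ μ₁ μ₂ : ℝ, ∃! c : ℝ × ℝ,
      (∫ p in Quad α β,
        (c.1 * fderiv ℝ (phi0 α β) p (1, 0) + c.2 * fderiv ℝ (phi0 α β) p (0, 1)) * p.2)
          = μ₁ ∧
      (∫ p in Quad α β,
        (c.1 * fderiv ℝ (phi0 α β) p (1, 0) + c.2 * fderiv ℝ (phi0 α β) p (0, 1)) * p.1)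
          = μ₂) := by
  have hD : (0:ℝ) < α^2+β^2+3 := by positivity
  have hD' : (α^2+β^2+3) ≠ 0 := ne_of_gt hD
  set D : ℝ := α^2+β^2+3 with hDdef
  set A : ℝ := (-8*α*β)/D with hA
  set B : ℝ := (4*α^2 - 12*β^2 - 12)/D with hB
  set C : ℝ := (4*β^2 - 12*α^2 - 12)/D with hC
  have hdet : (coeffMat α β).det = A * A - B * C := by
    rw [coeffMat, Matrix.det_fin_two_of,
      QLTZ.entry00 α β hα hβ hαβ, QLTZ.entry01 α β hα hβ hαβ,
      QLTZ.entry10 α β hα hβ hαβ, QLTZ.entry11 α β hα hβ hαβ]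
  have hdetval : (coeffMat α β).det =
      (48*α^4 + 48*β^4 - 96*α^2*β^2 - 96*α^2 - 96*β^2 - 144) / D^2 := by
    rw [hdet, hA, hB, hC]
    field_simp
    ring
  have hnumneg : (48*α^4 + 48*β^4 - 96*α^2*β^2 - 96*α^2 - 96*β^2 - 144 : ℝ) < 0 := by
    have h1 : α^2 < 1 := by nlinarith
    have h2 : β^2 < 1 := by nlinarith
    have h3 : (α^2 - β^2)^2 < 1 := by
      nlinarith [mul_pos (by nlinarith : (0:ℝ) < 1 - (α^2 - β^2))
        (by nlinarith : (0:ℝ) < 1 + (α^2 - β^2))]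
    nlinarith [sq_nonneg α, sq_nonneg β]
  have hdetneg : (coeffMat α β).det < 0 := by
    rw [hdetval]
    apply div_neg_of_neg_of_pos hnumneg
    positivity
  refine ⟨?_, ne_of_lt hdetneg, ?_, ?_⟩
  · rw [hdetval]
    field_simp
    try ring
  · rw [abs_of_neg hdetneg, hdetval]
    field_simp
    ring
  · intro μ₁ μ₂
    have hlin : ∀ c₁ c₂ : ℝ,
        (∫ p in Quad α β,
          (c₁ * fderiv ℝ (phi0 α β) p (1, 0) + c₂ * fderiv ℝ (phi0 α β) p (0, 1)) * p.2)
          = c₁ * A + c₂ * B ∧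
        (∫ p in Quad α β,
          (c₁ * fderiv ℝ (phi0 α β) p (1, 0) + c₂ * fderiv ℝ (phi0 α β) p (0, 1)) * p.1)
          = c₁ * C + c₂ * A := by
      intro c₁ c₂
      have hint1 : IntegrableOn (fun p : ℝ × ℝ => (3*β - 9*p.1) * p.2) (Quad α β) volume :=
        QLTZ.integrableOn_quad α β (by fun_prop)
      have hint2 : IntegrableOn (fun p : ℝ × ℝ => (3*α - 9*p.2) * p.2) (Quad α β) volume :=
        QLTZ.integrableOn_quad α β (by fun_prop)
      have hint3 : IntegrableOn (fun p : ℝ × ℝ => (3*β - 9*p.1) * p.1) (Quad α β) volume :=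
        QLTZ.integrableOn_quad α β (by fun_prop)
      have hint4 : IntegrableOn (fun p : ℝ × ℝ => (3*α - 9*p.2) * p.1) (Quad α β) volume :=
        QLTZ.integrableOn_quad α β (by fun_prop)
      constructor
      · calc (∫ p in Quad α β,
            (c₁ * fderiv ℝ (phi0 α β) p (1, 0) + c₂ * fderiv ℝ (phi0 α β) p (0, 1)) * p.2)
            = ∫ p in Quad α β, ((c₁/D) * ((3*β - 9*p.1) * p.2) +
                (c₂/D) * ((3*α - 9*p.2) * p.2)) := by
              refine integral_congr_ae (Filter.EventuallyEq.of_eq (funext fun p => ?_))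
              rw [QLTZ.fderiv_phi0_eta, QLTZ.fderiv_phi0_xi]
              rw [hDdef]
              field_simp
          _ = (c₁/D) * (∫ p in Quad α β, (3*β - 9*p.1) * p.2) +
              (c₂/D) * (∫ p in Quad α β, (3*α - 9*p.2) * p.2) := by
              rw [MeasureTheory.integral_add (hint1.const_mul _) (hint2.const_mul _),
                MeasureTheory.integral_const_mul, MeasureTheory.integral_const_mul]
          _ = c₁ * A + c₂ * B := by
              rw [QLTZ.int_entry11 α β hα hβ hαβ, QLTZ.int_entry12 α β hα hβ hαβ, hA, hB]
              field_simp
      · calc (∫ p in Quad α β,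
            (c₁ * fderiv ℝ (phi0 α β) p (1, 0) + c₂ * fderiv ℝ (phi0 α β) p (0, 1)) * p.1)
            = ∫ p in Quad α β, ((c₁/D) * ((3*β - 9*p.1) * p.1) +
                (c₂/D) * ((3*α - 9*p.2) * p.1)) := by
              refine integral_congr_ae (Filter.EventuallyEq.of_eq (funext fun p => ?_))
              rw [QLTZ.fderiv_phi0_eta, QLTZ.fderiv_phi0_xi]
              rw [hDdef]
              field_simp
          _ = (c₁/D) * (∫ p in Quad α β, (3*β - 9*p.1) * p.1) +
              (c₂/D) * (∫ p in Quad α β, (3*α - 9*p.2) * p.1) := by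
              rw [MeasureTheory.integral_add (hint3.const_mul _) (hint4.const_mul _),
                MeasureTheory.integral_const_mul, MeasureTheory.integral_const_mul]
          _ = c₁ * C + c₂ * A := by
              rw [QLTZ.int_entry21 α β hα hβ hαβ, QLTZ.int_entry22 α β hα hβ hαβ, hC, hA]
              field_simp
    have hd0 : A * A - B * C ≠ 0 := by
      rw [← hdet]
      exact ne_of_lt hdetneg
    refine ⟨((μ₁*A - μ₂*B)/(A*A - B*C), (μ₂*A - μ₁*C)/(A*A - B*C)), ?_, ?_⟩
    · obtain ⟨h1, h2⟩ := hlin ((μ₁*A - μ₂*B)/(A*A - B*C)) ((μ₂*A - μ₁*C)/(A*A - B*C))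
      constructor
      · rw [h1]
        rw [div_mul_eq_mul_div _ (A*A - B*C) A, div_mul_eq_mul_div _ (A*A - B*C) B, ← add_div, div_eq_iff hd0]
        ring
      · rw [h2]
        rw [div_mul_eq_mul_div _ (A*A - B*C) C, div_mul_eq_mul_div _ (A*A - B*C) A, ← add_div, div_eq_iff hd0]
        ring
    · rintro ⟨y₁, y₂⟩ ⟨hy1, hy2⟩
      obtain ⟨h1, h2⟩ := hlin y₁ y₂
      rw [h1] at hy1
      rw [h2] at hy2
      have e1 : y₁ * (A*A - B*C) = μ₁*A - μ₂*B := by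
        linear_combination A * hy1 - B * hy2
      have e2 : y₂ * (A*A - B*C) = μ₂*A - μ₁*C := by
        linear_combination A * hy2 - C * hy1
      have hy1' : y₁ = (μ₁*A - μ₂*B)/(A*A - B*C) := by
        rw [eq_div_iff hd0]
        linarith [e1]
      have hy2' : y₂ = (μ₂*A - μ₁*C)/(A*A - B*C) := by
        rw [eq_div_iff hd0]
        linarith [e2]
      exact Prod.ext_iff.2 ⟨hy1', hy2'⟩
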